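/- For all complex numbers z with |z| ≤ 1, Σ_{m=0}^{∞} e_{S,m} z^m = Π_p (1 + (z−1)/p²), the product running over all primes p. -/

import Mathlib

open scoped BigOperators

/-- A positive integer is *powerful* if every prime dividing it divides it with
multiplicity at least `2`. -/
def Powerful (f : ℕ) : Prop := 0 < f ∧ ∀ p : ℕ, p.Prime → p ∣ f → p ^ 2 ∣ f

/-- `ω_S(n)`: the number of primes dividing `n` with multiplicity at least `2`. -/
def omegaS (n : ℕ) : ℕ := (n.primeFactors.filter fun p => 2 ≤ n.factorization p).card

/-- The density `e_{S,m}` of integers `n` with `ω_S(n) = m`. -/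
noncomputable def eSm (m : ℕ) : ℝ :=
  6 / Real.pi ^ 2 *
    ∑' f : {f : ℕ // Powerful f ∧ omegaS f = m},
      ((f : ℕ) : ℝ)⁻¹ * ∏ p ∈ (f : ℕ).primeFactors, (1 + 1 / (p : ℝ))⁻¹

lemma powerful_one : Powerful 1 :=
  ⟨one_pos, fun p hp hd => absurd (Nat.eq_one_of_dvd_one hd) hp.ne_one⟩

lemma powerful_pow {p e : ℕ} (hp : p.Prime) (he : 2 ≤ e) : Powerful (p ^ e) := by
  refine ⟨Nat.pow_pos hp.pos, fun q hq hd => ?_⟩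
  have hqp : q = p := (Nat.prime_dvd_prime_iff_eq hq hp).mp (hq.dvd_of_dvd_pow hd)
  subst hqp
  exact pow_dvd_pow q he

lemma not_powerful_prime {p : ℕ} (hp : p.Prime) : ¬ Powerful p := by
  rintro ⟨-, h⟩
  have := Nat.le_of_dvd hp.pos (h p hp dvd_rfl)
  have h2 : p ^ 2 = p * p := sq p
  nlinarith [hp.two_le]

lemma powerful_mul {m n : ℕ} (hm : Powerful m) (hn : Powerful n) :
    Powerful (m * n) := by
  refine ⟨Nat.mul_pos hm.1 hn.1, fun p hp hd => ?_⟩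
  rcases (Nat.Prime.dvd_mul hp).mp hd with h1 | h1
  · exact dvd_mul_of_dvd_left (hm.2 p hp h1) n
  · exact dvd_mul_of_dvd_right (hn.2 p hp h1) m

lemma powerful_of_mul_left {m n : ℕ} (h : Nat.Coprime m n) (hmn : Powerful (m * n)) :
    Powerful m := by
  have h0 := hmn.1
  refine ⟨Nat.pos_of_ne_zero fun hm => by subst hm; simp at h0, fun p hp hd => ?_⟩
  have hpn : Nat.Coprime p n := Nat.Coprime.coprime_dvd_left hd h
  exact (hpn.pow_left 2).dvd_of_dvd_mul_right (hmn.2 p hp (hd.mul_right n))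

lemma powerful_of_mul_right {m n : ℕ} (h : Nat.Coprime m n) (hmn : Powerful (m * n)) :
    Powerful n :=
  powerful_of_mul_left (n := m) h.symm (by rwa [mul_comm])

lemma powerful_exists {f : ℕ} (hf : Powerful f) : ∃ a b : ℕ, f = a ^ 2 * b ^ 3 := by
  induction f using Nat.strong_induction_on with
  | _ f ih =>
    rcases eq_or_ne f 1 with rfl | hf1
    · exact ⟨1, 1, rfl⟩
    have hf0 : f ≠ 0 := hf.1.ne'
    have hpp : (f.minFac).Prime := Nat.minFac_prime hf1
    set p := f.minFac with hp
    set e := f.factorization p with he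
    have hpd : p ∣ f := Nat.minFac_dvd f
    have he2 : 2 ≤ e := (Nat.Prime.pow_dvd_iff_le_factorization hpp hf0).mp (hf.2 p hpp hpd)
    set g := ordCompl[p] f with hg
    have hsplit : p ^ e * g = f := Nat.ordProj_mul_ordCompl_eq_self f p
    have hgdvd : g ∣ f := Nat.ordCompl_dvd f p
    have hnd : ¬ p ∣ g := Nat.not_dvd_ordCompl hpp hf0
    have hglt : g < f := lt_of_le_of_ne (Nat.le_of_dvd hf.1 hgdvd)
      (fun hh => hnd (hh ▸ hpd))
    have hcop : Nat.Coprime (p ^ e) g := (Nat.coprime_ordCompl hpp hf0).pow_left e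
    have hgpow : Powerful g := powerful_of_mul_right hcop (hsplit.symm ▸ hf)
    obtain ⟨a, b, hab⟩ := ih g hglt hgpow
    obtain ⟨i, j, hij⟩ : ∃ i j : ℕ, e = 2 * i + 3 * j := by
      rcases Nat.even_or_odd e with ⟨k, hk⟩ | ⟨k, hk⟩
      · exact ⟨k, 0, by omega⟩
      · exact ⟨k - 1, 1, by omega⟩
    refine ⟨p ^ i * a, p ^ j * b, ?_⟩
    rw [← hsplit, hab, hij]
    ring

lemma omegaS_one : omegaS 1 = 0 := by simp [omegaS]

lemma omegaS_mul {m n : ℕ} (hm : m ≠ 0) (hn : n ≠ 0) (h : Nat.Coprime m n) :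
    omegaS (m * n) = omegaS m + omegaS n := by
  unfold omegaS
  rw [Nat.primeFactors_mul hm hn, Nat.factorization_mul hm hn]
  rw [Finset.filter_union]
  have key : ∀ (a b : ℕ), a ≠ 0 → b ≠ 0 → Nat.Coprime a b →
      (a.primeFactors.filter fun p => 2 ≤ (a.factorization + b.factorization) p) =
      (a.primeFactors.filter fun p => 2 ≤ a.factorization p) := by
    intro a b ha hb hab
    apply Finset.filter_congr
    intro p hp
    have hpb : b.factorization p = 0 := by
      apply Nat.factorization_eq_zero_of_not_dvd
      intro hdvd
      have hpa := Nat.dvd_of_mem_primeFactors hp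
      have : p ∣ Nat.gcd a b := Nat.dvd_gcd hpa hdvd
      rw [hab] at this
      exact Nat.Prime.ne_one (Nat.prime_of_mem_primeFactors hp) (Nat.eq_one_of_dvd_one this)
    simp [Finsupp.add_apply, hpb]
  rw [key m n hm hn h]
  have h2 : (n.primeFactors.filter fun p => 2 ≤ (m.factorization + n.factorization) p) =
      (n.primeFactors.filter fun p => 2 ≤ n.factorization p) := by
    have := key n m hn hm h.symm
    rw [add_comm] at this
    exact this
  rw [h2]
  exact Finset.card_union_of_disjoint <| Finset.disjoint_filter_filter <|
    Nat.Coprime.disjoint_primeFactors h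

noncomputable def gval (f : ℕ) : ℝ :=
  ((f : ℕ) : ℝ)⁻¹ * ∏ p ∈ (f : ℕ).primeFactors, (1 + 1 / (p : ℝ))⁻¹

lemma gval_nonneg (f : ℕ) : 0 ≤ gval f := by
  unfold gval
  apply mul_nonneg (by positivity)
  apply Finset.prod_nonneg
  intro p hp
  have : (0:ℝ) < p := by
    exact_mod_cast (Nat.prime_of_mem_primeFactors hp).pos
  positivity

lemma gval_le (f : ℕ) : gval f ≤ ((f : ℕ) : ℝ)⁻¹ := by
  unfold gval
  have h1 : ∏ p ∈ f.primeFactors, (1 + 1 / (p : ℝ))⁻¹ ≤ 1 := by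
    apply Finset.prod_le_one
    · intro p hp
      have : (0:ℝ) < p := by exact_mod_cast (Nat.prime_of_mem_primeFactors hp).pos
      positivity
    · intro p hp
      have : (0:ℝ) < p := by exact_mod_cast (Nat.prime_of_mem_primeFactors hp).pos
      rw [inv_le_one_iff₀]
      right
      nlinarith [one_div_pos.mpr this]
  calc (f:ℝ)⁻¹ * ∏ p ∈ f.primeFactors, (1 + 1 / (p : ℝ))⁻¹ ≤ (f:ℝ)⁻¹ * 1 :=
        mul_le_mul_of_nonneg_left h1 (by positivity)
    _ = (f:ℝ)⁻¹ := mul_one _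

lemma gval_mul {m n : ℕ} (hm : m ≠ 0) (hn : n ≠ 0) (h : Nat.Coprime m n) :
    gval (m * n) = gval m * gval n := by
  unfold gval
  rw [Nat.primeFactors_mul hm hn,
    Finset.prod_union (Nat.Coprime.disjoint_primeFactors h)]
  push_cast
  ring

open Classical in
noncomputable def Fz (z : ℂ) (n : ℕ) : ℂ :=
  if Powerful n then z ^ (omegaS n) * ((gval n : ℝ) : ℂ) else 0

open Classical in
lemma Fz_zero (z : ℂ) : Fz z 0 = 0 := by
  simp [Fz, Powerful]

open Classical in
lemma Fz_one (z : ℂ) : Fz z 1 = 1 := by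
  simp [Fz, powerful_one, omegaS_one, gval]

open Classical in
lemma Fz_mul (z : ℂ) {m n : ℕ} (h : Nat.Coprime m n) :
    Fz z (m * n) = Fz z m * Fz z n := by
  by_cases hm : Powerful m
  · by_cases hn : Powerful n
    · have hmn := powerful_mul hm hn
      rw [Fz, Fz, Fz, if_pos hmn, if_pos hm, if_pos hn,
        omegaS_mul hm.1.ne' hn.1.ne' h, gval_mul hm.1.ne' hn.1.ne' h]
      push_cast
      ring
    · have hmn : ¬ Powerful (m * n) := fun hc => hn (powerful_of_mul_right h hc)
      simp [Fz, hmn, hn]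
  · have hmn : ¬ Powerful (m * n) := fun hc => hm (powerful_of_mul_left h hc)
    simp [Fz, hmn, hm]

open Classical in
lemma norm_Fz_le (z : ℂ) (hz : ‖z‖ ≤ 1) (n : ℕ) :
    ‖Fz z n‖ ≤ (if Powerful n then ((n : ℕ) : ℝ)⁻¹ else 0) := by
  rw [Fz]
  split_ifs with h
  · rw [norm_mul]
    calc ‖z ^ omegaS n‖ * ‖((gval n : ℝ) : ℂ)‖
        ≤ 1 * ‖((gval n : ℝ) : ℂ)‖ := by
          apply mul_le_mul_of_nonneg_right _ (norm_nonneg _)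
          rw [norm_pow]
          exact pow_le_one₀ (norm_nonneg z) hz
      _ = |gval n| := by rw [one_mul, Complex.norm_real, Real.norm_eq_abs]
      _ = gval n := abs_of_nonneg (gval_nonneg n)
      _ ≤ _ := gval_le n
  · simp

open Classical in
lemma summable_powerful_inv :
    Summable (fun n : ℕ => if Powerful n then ((n : ℕ) : ℝ)⁻¹ else 0) := by
  rw [← summable_subtype_and_compl (s := {n : ℕ | Powerful n})]
  constructor
  · -- summable over powerful numbers
    have hψ : Summable (fun x : ℕ × ℕ => ((x.1 ^ 2 * x.2 ^ 3 : ℕ) : ℝ)⁻¹) := by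
      have h2 : Summable (fun a : ℕ => ((a : ℝ) ^ 2)⁻¹) :=
        (Real.summable_nat_pow_inv (p := 2)).mpr (by norm_num)
      have h3 : Summable (fun b : ℕ => ((b : ℝ) ^ 3)⁻¹) :=
        (Real.summable_nat_pow_inv (p := 3)).mpr (by norm_num)
      have := h2.mul_of_nonneg h3 (fun a => by positivity) (fun b => by positivity)
      apply this.congr
      intro x
      push_cast
      rw [mul_inv]
    -- choose a decomposition for each powerful number
    have hchoice : ∀ s : {n : ℕ | Powerful n}, ∃ x : ℕ × ℕ,
        (s : ℕ) = x.1 ^ 2 * x.2 ^ 3 := by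
      rintro ⟨n, hn⟩
      obtain ⟨a, b, hab⟩ := powerful_exists hn
      exact ⟨(a, b), hab⟩
    choose φ hφ using hchoice
    have hinj : Function.Injective φ := by
      intro s t hst
      apply Subtype.ext
      rw [show (s : ℕ) = _ from hφ s, show (t : ℕ) = _ from hφ t, hst]
    have hcomp := hψ.comp_injective hinj
    apply Summable.congr hcomp
    intro s
    simp only [Function.comp_apply]
    rw [if_pos (show Powerful (s:ℕ) from s.2)]
    congr 1
    exact_mod_cast congrArg (fun k : ℕ => ((k : ℝ))) (hφ s).symm
  · apply summable_of_ne_finset_zero (s := ∅)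
    intro n hn
    exact if_neg n.2

open Classical in
lemma summable_norm_Fz (z : ℂ) (hz : ‖z‖ ≤ 1) : Summable (fun n => ‖Fz z n‖) :=
  Summable.of_nonneg_of_le (fun _ => norm_nonneg _) (norm_Fz_le z hz) summable_powerful_inv

lemma omegaS_prime_pow {p e : ℕ} (hp : p.Prime) (he : 2 ≤ e) : omegaS (p ^ e) = 1 := by
  unfold omegaS
  rw [Nat.primeFactors_pow _ (by omega : e ≠ 0), hp.primeFactors, hp.factorization_pow]
  rw [show ({p} : Finset ℕ).filter (fun q => 2 ≤ (Finsupp.single p e) q) = {p} from ?_]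
  · simp
  · apply Finset.filter_true_of_mem
    intro q hq
    rw [Finset.mem_singleton] at hq
    subst hq
    simpa [Finsupp.single_apply] using he

lemma gval_prime_pow {p e : ℕ} (hp : p.Prime) (he : 1 ≤ e) :
    gval (p ^ e) = ((p:ℝ) ^ e)⁻¹ * (1 + 1 / (p:ℝ))⁻¹ := by
  unfold gval
  rw [Nat.primeFactors_pow _ (by omega : e ≠ 0), hp.primeFactors]
  push_cast
  simp

open Classical in
lemma hasSum_local_Fz (z : ℂ) {p : ℕ} (hp : p.Prime) :
    HasSum (fun e : ℕ => Fz z (p ^ e)) (1 + z / ((p:ℂ) ^ 2 - 1)) := by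
  have hp2 : (2:ℝ) ≤ (p:ℝ) := by exact_mod_cast hp.two_le
  have hp0 : (p:ℂ) ≠ 0 := by
    exact_mod_cast Nat.cast_ne_zero.mpr hp.pos.ne'
  have hpinv : ‖(p:ℂ)⁻¹‖ < 1 := by
    rw [norm_inv, Complex.norm_natCast]
    rw [inv_lt_one_iff₀]
    right
    linarith
  have hp1 : (p:ℂ) ≠ 1 := by
    exact_mod_cast fun h => hp.one_lt.ne' (Nat.cast_injective h)
  have hpm1 : (p:ℂ) + 1 ≠ 0 := by
    intro h
    have : ((p + 1 : ℕ) : ℂ) = 0 := by push_cast; linear_combination h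
    exact_mod_cast Nat.cast_ne_zero.mpr (by omega : p + 1 ≠ 0) this
  have hpsq : (p:ℂ) ^ 2 - 1 ≠ 0 := by
    intro h
    have h2 : (p:ℂ)^2 = 1 := by linear_combination h
    have : ((p^2 : ℕ) : ℂ) = ((1:ℕ) : ℂ) := by push_cast; linear_combination h2
    have := Nat.cast_injective this
    nlinarith [hp.two_le]
  set c : ℂ := z * (((1 + 1 / (p:ℝ))⁻¹ : ℝ) : ℂ) * ((p:ℂ)⁻¹) ^ 2 with hc
  have h2 : ∀ e : ℕ, Fz z (p ^ (e + 2)) = c * ((p:ℂ)⁻¹) ^ e := by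
    intro e
    rw [Fz, if_pos (powerful_pow hp (by omega)), omegaS_prime_pow hp (by omega),
      gval_prime_pow hp (by omega)]
    push_cast
    rw [hc]
    push_cast
    simp only [inv_pow]
    field_simp
    ring
  have hgeo : HasSum (fun e : ℕ => c * ((p:ℂ)⁻¹) ^ e) (c * (1 - (p:ℂ)⁻¹)⁻¹) :=
    (hasSum_geometric_of_norm_lt_one hpinv).mul_left c
  have hsum2 : HasSum (fun e : ℕ => Fz z (p ^ (e + 2))) (c * (1 - (p:ℂ)⁻¹)⁻¹) := by
    rw [show (fun e : ℕ => Fz z (p ^ (e + 2))) = (fun e : ℕ => c * ((p:ℂ)⁻¹) ^ e) from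
      funext fun e => h2 e]
    exact hgeo
  have htot := (hasSum_nat_add_iff (f := fun e : ℕ => Fz z (p ^ e)) 2).mp hsum2
  have hrange : ∑ i ∈ Finset.range 2, Fz z (p ^ i) = 1 := by
    rw [Finset.sum_range_succ, Finset.sum_range_one, pow_zero, pow_one, Fz_one,
      show Fz z p = 0 from if_neg (not_powerful_prime hp)]
    ring
  rw [hrange] at htot
  have hq : (-(p:ℂ) ^ 2 + (p:ℂ) ^ 4) ≠ 0 := by
    have : (-(p:ℂ) ^ 2 + (p:ℂ) ^ 4) = (p:ℂ) ^ 2 * ((p:ℂ) ^ 2 - 1) := by ring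
    rw [this]
    exact mul_ne_zero (pow_ne_zero 2 hp0) hpsq
  have hval : c * (1 - (p:ℂ)⁻¹)⁻¹ + 1 = 1 + z / ((p:ℂ) ^ 2 - 1) := by
    rw [hc]
    push_cast
    field_simp [hq]
    have hD : (1 : ℂ) / (-(p:ℂ) ^ 2 + (p:ℂ) ^ 4) * (-(p:ℂ) ^ 2 + (p:ℂ) ^ 4) = 1 :=
      one_div_mul_cancel hq
    linear_combination (0:ℂ) * hD
  rwa [hval] at htot

open ArithmeticFunction in
noncomputable def Fmu (n : ℕ) : ℂ :=
  if n = 0 then 0 else ((moebius n : ℤ) : ℂ) / ((n : ℂ) ^ 2)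

lemma Fmu_zero : Fmu 0 = 0 := by simp [Fmu]

lemma Fmu_one : Fmu 1 = 1 := by
  simp [Fmu]

open ArithmeticFunction in
lemma Fmu_mul {m n : ℕ} (h : Nat.Coprime m n) : Fmu (m * n) = Fmu m * Fmu n := by
  by_cases hm : m = 0
  · subst hm; simp [Fmu]
  by_cases hn : n = 0
  · subst hn; simp [Fmu]
  rw [Fmu, Fmu, Fmu, if_neg hm, if_neg hn, if_neg (Nat.mul_ne_zero hm hn)]
  rw [isMultiplicative_moebius.map_mul_of_coprime h]
  push_cast
  ring

open ArithmeticFunction in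
lemma summable_norm_Fmu : Summable (fun n => ‖Fmu n‖) := by
  have hs : Summable (fun n : ℕ => ((n : ℝ) ^ 2)⁻¹) :=
    (Real.summable_nat_pow_inv (p := 2)).mpr (by norm_num)
  have hle : ∀ n : ℕ, ‖Fmu n‖ ≤ ((n : ℝ) ^ 2)⁻¹ := by
    intro n
    by_cases hn : n = 0
    · subst hn; simp [Fmu]
    · rw [Fmu, if_neg hn, norm_div]
      have h1 : ‖((moebius n : ℤ) : ℂ)‖ ≤ 1 := by
        rw [Complex.norm_intCast]
        exact_mod_cast abs_moebius_le_one (n := n)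
      have h2 : ‖((n : ℂ)) ^ 2‖ = (n : ℝ) ^ 2 := by
        rw [norm_pow, Complex.norm_natCast]
      rw [h2, div_eq_mul_inv]
      have hn0 : (0:ℝ) < (n:ℝ) ^ 2 := by
        have : 0 < n := Nat.pos_of_ne_zero hn
        positivity
      calc ‖((moebius n : ℤ) : ℂ)‖ * ((n:ℝ)^2)⁻¹ ≤ 1 * ((n:ℝ)^2)⁻¹ :=
            mul_le_mul_of_nonneg_right h1 (by positivity)
        _ = ((n:ℝ)^2)⁻¹ := one_mul _
  exact Summable.of_nonneg_of_le (fun _ => norm_nonneg _) hle hs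

open ArithmeticFunction in
lemma hasSum_local_Fmu {p : ℕ} (hp : p.Prime) :
    HasSum (fun e : ℕ => Fmu (p ^ e)) (1 - ((p:ℂ) ^ 2)⁻¹) := by
  have hp0 : (p:ℂ) ≠ 0 := Nat.cast_ne_zero.mpr hp.pos.ne'
  have hzero : ∀ e ∉ ({0, 1} : Finset ℕ), Fmu (p ^ e) = 0 := by
    intro e he
    simp only [Finset.mem_insert, Finset.mem_singleton] at he
    push_neg at he
    rw [Fmu, if_neg (pow_ne_zero e hp.pos.ne')]
    rw [moebius_apply_prime_pow hp he.1, if_neg he.2]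
    simp
  have : HasSum (fun e : ℕ => Fmu (p ^ e)) _ := hasSum_sum_of_ne_finset_zero hzero
  convert this using 1
  rw [show ({0, 1} : Finset ℕ) = insert 0 {1} from rfl, Finset.sum_insert (by simp),
    Finset.sum_singleton, pow_zero, pow_one, Fmu_one]
  rw [Fmu, if_neg hp.pos.ne', moebius_apply_prime hp]
  push_cast
  field_simp
  ring

lemma pC_ne_zero {p : ℕ} (hp : p.Prime) : ((p:ℕ):ℂ) ≠ 0 :=
  Nat.cast_ne_zero.mpr hp.pos.ne'

lemma psq_sub_one_ne_zero {p : ℕ} (hp : p.Prime) : ((p:ℕ):ℂ) ^ 2 - 1 ≠ 0 := by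
  intro h
  have h2 : ((p:ℕ):ℂ)^2 = 1 := by linear_combination h
  have : ((p^2 : ℕ) : ℂ) = ((1:ℕ) : ℂ) := by push_cast; linear_combination h2
  have := Nat.cast_injective this
  nlinarith [hp.two_le]

open scoped LSeries.notation ArithmeticFunction.Moebius in
open ArithmeticFunction in
lemma hasProd_mu :
    HasProd (fun p : Nat.Primes => 1 - (((p:ℕ):ℂ) ^ 2)⁻¹) (6 / (Real.pi:ℂ) ^ 2) := by
  have h2 : (1:ℝ) < (2:ℂ).re := by norm_num
  have hEP := EulerProduct.eulerProduct_hasProd (f := Fmu) Fmu_one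
    (fun {m n} h => Fmu_mul h) summable_norm_Fmu Fmu_zero
  have hloc : (fun p : Nat.Primes => ∑' e : ℕ, Fmu ((p:ℕ) ^ e)) =
      fun p : Nat.Primes => 1 - (((p:ℕ):ℂ) ^ 2)⁻¹ :=
    funext fun p => (hasSum_local_Fmu p.2).tsum_eq
  rw [hloc] at hEP
  have hterm : Fmu = LSeries.term (↗μ) 2 := by
    funext n
    by_cases hn : n = 0
    · subst hn; simp [Fmu, LSeries.term]
    · rw [Fmu, if_neg hn, LSeries.term_of_ne_zero hn,
        show (2:ℂ) = ((2:ℕ):ℂ) by norm_num, Complex.cpow_natCast]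
  have hL : ∑' n, Fmu n = LSeries (↗μ) 2 := by rw [hterm]; rfl
  have hmul := LSeries_zeta_mul_Lseries_moebius (s := 2) h2
  rw [LSeries_zeta_eq_riemannZeta h2, riemannZeta_two] at hmul
  have hpi : ((Real.pi:ℂ)) ^ 2 ≠ 0 :=
    pow_ne_zero _ (Complex.ofReal_ne_zero.mpr Real.pi_ne_zero)
  have hval : ∑' n, Fmu n = 6 / (Real.pi:ℂ) ^ 2 := by
    rw [hL, eq_div_iff hpi]
    linear_combination 6 * hmul
  rwa [hval] at hEP

open Classical in
lemma hasProd_Fz (z : ℂ) (hz : ‖z‖ ≤ 1) :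
    HasProd (fun p : Nat.Primes => 1 + z / (((p:ℕ):ℂ) ^ 2 - 1)) (∑' n, Fz z n) := by
  have hEP := EulerProduct.eulerProduct_hasProd (f := Fz z) (Fz_one z)
    (fun {m n} h => Fz_mul z h) (summable_norm_Fz z hz) (Fz_zero z)
  have hloc : (fun p : Nat.Primes => ∑' e : ℕ, Fz z ((p:ℕ) ^ e)) =
      fun p : Nat.Primes => 1 + z / (((p:ℕ):ℂ) ^ 2 - 1) :=
    funext fun p => (hasSum_local_Fz z p.2).tsum_eq
  rwa [hloc] at hEP

lemma factor_eq (z : ℂ) {p : ℕ} (hp : p.Prime) :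
    (1 - (((p:ℕ):ℂ) ^ 2)⁻¹) * (1 + z / (((p:ℕ):ℂ) ^ 2 - 1)) =
      1 + (z - 1) / ((p:ℕ):ℂ) ^ 2 := by
  have h0 := pC_ne_zero hp
  have h1 := psq_sub_one_ne_zero hp
  field_simp
  ring

open Classical in
lemma summable_gval_fiber (m : ℕ) :
    Summable (fun f : {f : ℕ // Powerful f ∧ omegaS f = m} => gval (f : ℕ)) := by
  have h1 : Summable (fun f : {f : ℕ // Powerful f ∧ omegaS f = m} =>
      if Powerful (f : ℕ) then (((f : ℕ) : ℕ) : ℝ)⁻¹ else 0) :=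
    summable_powerful_inv.comp_injective Subtype.coe_injective
  refine Summable.of_nonneg_of_le (fun f => gval_nonneg _) (fun f => ?_) h1
  rw [if_pos f.2.1]
  exact gval_le _

open Classical in
lemma hasSum_fiber (z : ℂ) (m : ℕ) :
    HasSum (fun f : {f : ℕ // Powerful f ∧ omegaS f = m} => Fz z (f : ℕ))
      (z ^ m * ((∑' f : {f : ℕ // Powerful f ∧ omegaS f = m}, gval (f : ℕ) : ℝ) : ℂ)) := by
  have hreal := (summable_gval_fiber m).hasSum
  have hC : HasSum (fun f : {f : ℕ // Powerful f ∧ omegaS f = m} => ((gval (f:ℕ) : ℝ) : ℂ))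
      (((∑' f : {f : ℕ // Powerful f ∧ omegaS f = m}, gval (f : ℕ) : ℝ) : ℂ)) :=
    Complex.hasSum_ofReal.mpr hreal
  have hmul := hC.mul_left (z ^ m)
  have hfun : (fun f : {f : ℕ // Powerful f ∧ omegaS f = m} => Fz z (f : ℕ)) =
      fun f : {f : ℕ // Powerful f ∧ omegaS f = m} => z ^ m * ((gval (f : ℕ) : ℝ) : ℂ) := by
    funext f
    rw [Fz, if_pos f.2.1, f.2.2]
  rw [hfun]
  exact hmul

def powerfulEquiv : (Σ m : ℕ, {f : ℕ // Powerful f ∧ omegaS f = m}) ≃ {f : ℕ // Powerful f} where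
  toFun x := ⟨x.2.1, x.2.2.1⟩
  invFun s := ⟨omegaS s.1, s.1, s.2, rfl⟩
  left_inv := by rintro ⟨m, f, hf, rfl⟩; rfl
  right_inv s := rfl

theorem eSm_generating_function (z : ℂ) (hz : ‖z‖ ≤ 1) :
    ∃ P : ℂ,
      HasProd (fun p : Nat.Primes => 1 + (z - 1) / ((p : ℕ) : ℂ) ^ 2) P ∧
      HasSum (fun m : ℕ => (eSm m : ℂ) * z ^ m) P := by
  classical
  refine ⟨(6 / (Real.pi:ℂ) ^ 2) * ∑' n, Fz z n, ?_, ?_⟩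
  · have hprod := hasProd_mu.mul (hasProd_Fz z hz)
    have hfun : (fun p : Nat.Primes =>
        (1 - (((p:ℕ):ℂ) ^ 2)⁻¹) * (1 + z / (((p:ℕ):ℂ) ^ 2 - 1))) =
        fun p : Nat.Primes => 1 + (z - 1) / (((p:ℕ):ℂ) ^ 2) :=
      funext fun p => factor_eq z p.2
    rwa [hfun] at hprod
  · have hsummable : Summable (Fz z) := (summable_norm_Fz z hz).of_norm
    have hsub : HasSum (fun s : {n : ℕ // Powerful n} => Fz z (s : ℕ)) (∑' n, Fz z n) := by
      have hss : Function.support (Fz z) ⊆ {n : ℕ | Powerful n} := by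
        intro n hn
        by_contra hc
        have hc' : ¬ Powerful n := hc
        exact hn (by simp [Fz, hc'])
      exact (hasSum_subtype_iff_of_support_subset hss).mpr hsummable.hasSum
    have hsig : HasSum
        (fun x : Σ m : ℕ, {f : ℕ // Powerful f ∧ omegaS f = m} => Fz z (x.2 : ℕ))
        (∑' n, Fz z n) :=
      (powerfulEquiv.hasSum_iff (f := fun s : {n : ℕ // Powerful n} => Fz z (s : ℕ))).mpr hsub
    have hsum := hsig.sigma (hasSum_fiber z)
    have hfinal := hsum.mul_left (6 / (Real.pi:ℂ) ^ 2)
    have hfun2 : (fun m : ℕ => (eSm m : ℂ) * z ^ m) =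
        fun m : ℕ => (6 / (Real.pi:ℂ) ^ 2) *
          (z ^ m * ((∑' f : {f : ℕ // Powerful f ∧ omegaS f = m}, gval (f : ℕ) : ℝ) : ℂ)) := by
      funext m
      have heSm : eSm m = 6 / Real.pi ^ 2 *
          ∑' f : {f : ℕ // Powerful f ∧ omegaS f = m}, gval (f : ℕ) := rfl
      rw [heSm]
      push_cast
      ring
    rwa [hfun2]
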